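/- Let c ∈ ℂ, R₀ := max(2, 2|c|), and let p_n ∈ ℂ[λ] (n ≥ 0) be defined by p_0 = 1, p_1 = λ − c, and p_{n+1} = λ·p_n − p_{n−1} for n ≥ 1. Then there exist a real number α > R₀ and a continuous function ρ : [0, 2π] → ℝ with ρ(θ) ≥ 0 for all θ ∈ (0, 2π), such that for all n, m ≥ 0: ∫₀^{2π} p_n(α e^{iθ}) · p_m(α e^{iθ}) · ρ(θ) dθ = δ_{n,m}. -/

import Mathlib

open Polynomial Finset

namespace RankOneAux

noncomputable def Pc (c : ℂ) : ℕ → Polynomial ℂ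
  | 0 => 1
  | 1 => X - C c
  | (n+2) => X * Pc c (n+1) - Pc c n

noncomputable def ec (c : ℂ) : ℕ → ℕ → ℂ
  | 0, n => if n = 0 then 1 else 0
  | (k+1), n => ec c k (n+1) + (if n = 0 then c * ec c k 0 else ec c k (n-1))

lemma Pc_monic_deg (c : ℂ) : ∀ n, (Pc c n).Monic ∧ (Pc c n).natDegree = n := by
  intro n
  induction n using Nat.twoStepInduction with
  | zero => simp [Pc, monic_one]
  | one =>
    refine ⟨?_, ?_⟩
    · simpa [Pc] using monic_X_sub_C c
    · simp [Pc]
  | more n ih1 ih2 =>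
    obtain ⟨hm1, hd1⟩ := ih2
    obtain ⟨hm0, hd0⟩ := ih1
    have hXm : (X * Pc c (n+1)).Monic := (monic_X).mul hm1
    have hXd : (X * Pc c (n+1)).natDegree = n + 2 := by
      rw [natDegree_mul (X_ne_zero) hm1.ne_zero, natDegree_X, hd1]; omega
    have hdeg : (Pc c n).degree < (X * Pc c (n+1)).degree := by
      rcases eq_or_ne (Pc c n) 0 with h | h
      · rw [h]; exact (degree_eq_natDegree hXm.ne_zero ▸ bot_lt_iff_ne_bot.2 (by simp))
      · rw [degree_eq_natDegree h, degree_eq_natDegree hXm.ne_zero, hXd, hd0]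
        exact_mod_cast Nat.lt_succ_of_lt (Nat.lt_succ_self n)
    constructor
    · simpa [Pc, sub_eq_add_neg] using hXm.add_of_left (by simpa using hdeg)
    · show (X * Pc c (n+1) - Pc c n).natDegree = n + 2
      rw [natDegree_sub_eq_left_of_natDegree_lt, hXd]
      rw [hXd, hd0]; omega


lemma ec_delta (c : ℂ) : ∀ k n, k ≤ n → ec c k n = if k = n then 1 else 0 := by
  intro k
  induction k with
  | zero => intro n _; simp [ec, eq_comm]
  | succ k ih =>
    intro n hkn
    have hn : n ≠ 0 := by omega
    rw [ec, if_neg hn]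
    rcases eq_or_lt_of_le hkn with h | h
    · have h1 : ec c k (n+1) = 0 := by
        rw [ih (n+1) (by omega)]; simp; omega
      have h2 : ec c k (n-1) = 1 := by
        rw [ih (n-1) (by omega)]; simp; omega
      rw [h1, h2, if_pos h]; ring
    · have h1 : ec c k (n+1) = 0 := by
        rw [ih (n+1) (by omega)]; simp; omega
      have h2 : ec c k (n-1) = 0 := by
        rw [ih (n-1) (by omega)]; simp; omega
      rw [h1, h2, if_neg (by omega)]; ring

lemma ec_bound (c : ℂ) : ∀ k n, ‖ec c k n‖ ≤ (2 + ‖c‖) ^ k := by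
  intro k
  induction k with
  | zero => intro n; rw [ec]; split <;> simp
  | succ k ih =>
    intro n
    rw [ec]
    have h1 := ih (n+1)
    have hc0 : (0:ℝ) ≤ ‖c‖ := norm_nonneg c
    have hpow : (0:ℝ) ≤ (2 + ‖c‖) ^ k := by positivity
    calc ‖(ec c k (n + 1) + if n = 0 then c * ec c k 0 else ec c k (n - 1))‖
        ≤ ‖ec c k (n+1)‖ +
            ‖(if n = 0 then c * ec c k 0 else ec c k (n - 1))‖ :=
          norm_add_le _ _
      _ ≤ (2 + ‖c‖)^k + (1 + ‖c‖) * (2 + ‖c‖)^k := by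
          gcongr
          split
          · rw [norm_mul]
            have := ih 0
            calc ‖c‖ * ‖ec c k 0‖
                ≤ ‖c‖ * (2 + ‖c‖)^k := by gcongr
              _ ≤ (1 + ‖c‖) * (2 + ‖c‖)^k := by nlinarith
          · calc ‖ec c k (n-1)‖ ≤ (2 + ‖c‖)^k := ih (n-1)
              _ ≤ (1 + ‖c‖) * (2 + ‖c‖)^k := by nlinarith
      _ = (2 + ‖c‖)^(k+1) := by ring
    

lemma E3 (c : ℂ) : ∀ n m : ℕ,
    ∑ j ∈ range (n+1), (Pc c n).coeff j * ec c j m = (if n = m then 1 else 0) := by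
  intro n
  induction n using Nat.twoStepInduction with
  | zero => intro m; simp [Pc, ec, eq_comm]
  | one =>
    intro m
    rcases m with _ | _ | m <;>
      simp [Pc, ec, Finset.sum_range_succ] <;> ring
  | more n ih1 ih2 =>
    intro m
    have hd1 : (Pc c (n+1)).natDegree = n + 1 := (Pc_monic_deg c (n+1)).2
    have hd0 : (Pc c n).natDegree = n := (Pc_monic_deg c n).2
    have hP : Pc c (n+2) = X * Pc c (n+1) - Pc c n := rfl
    rw [hP]
    have hsplit : ∑ j ∈ range (n+3), (X * Pc c (n+1) - Pc c n).coeff j * ec c j m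
        = (∑ j ∈ range (n+3), (X * Pc c (n+1)).coeff j * ec c j m)
          - ∑ j ∈ range (n+3), (Pc c n).coeff j * ec c j m := by
      rw [← Finset.sum_sub_distrib]
      congr 1; ext j; rw [coeff_sub]; ring
    have h1 : ∑ j ∈ range (n+3), (X * Pc c (n+1)).coeff j * ec c j m
        = ∑ i ∈ range (n+2), (Pc c (n+1)).coeff i * ec c (i+1) m := by
      refine (Finset.sum_range_succ'
        (fun j => (X * Pc c (n+1)).coeff j * ec c j m) (n+2)).trans ?_
      simp [coeff_X_mul, mul_coeff_zero]
    have h2 : ∑ j ∈ range (n+3), (Pc c n).coeff j * ec c j m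
        = ∑ j ∈ range (n+1), (Pc c n).coeff j * ec c j m := by
      symm
      apply Finset.sum_subset (Finset.range_subset_range.2 (by omega))
      intro j _ hj
      have hnj : n < j := by simpa using hj
      rw [coeff_eq_zero_of_natDegree_lt (show (Pc c n).natDegree < j by rw [hd0]; omega),
        zero_mul]
    rw [hsplit, h1, h2, ih1 m]
    rcases Nat.eq_zero_or_pos m with hm | hm
    · subst hm
      have he : ∀ i, ec c (i+1) 0 = ec c i 1 + c * ec c i 0 := by
        intro i; rw [ec]; simp
      simp only [he, mul_add]
      rw [Finset.sum_add_distrib]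
      have hc : ∑ i ∈ range (n+2), (Pc c (n+1)).coeff i * (c * ec c i 0)
          = c * ∑ i ∈ range (n+2), (Pc c (n+1)).coeff i * ec c i 0 := by
        rw [Finset.mul_sum]; congr 1; ext i; ring
      rw [hc, ih2 1, ih2 0, if_neg (show ¬ n+1 = 0 by omega),
        if_neg (show ¬ n+2 = 0 by omega)]
      by_cases h : n = 0
      · rw [if_pos (by omega : n+1 = 1), if_pos h]; ring
      · rw [if_neg (by omega : ¬ n+1 = 1), if_neg h]; ring
    · have hm' : m ≠ 0 := by omega
      have he : ∀ i, ec c (i+1) m = ec c i (m+1) + ec c i (m-1) := by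
        intro i; rw [ec, if_neg hm']
      simp only [he, mul_add]
      rw [Finset.sum_add_distrib, ih2 (m+1), ih2 (m-1)]
      by_cases hnm : n = m
      · rw [if_pos (by omega : n+1 = m+1), if_pos hnm,
          if_neg (by omega : ¬ n+1 = m-1), if_neg (by omega : ¬ n+2 = m)]
        ring
      · rw [if_neg (by omega : ¬ n+1 = m+1), if_neg hnm]
        by_cases h2 : n + 2 = m
        · rw [if_pos (by omega : n+1 = m-1), if_pos h2]; ring
        · rw [if_neg (by omega : ¬ n+1 = m-1), if_neg h2]; ring


noncomputable def Lhom (c : ℂ) : Polynomial ℂ →+ ℂ where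
  toFun q := q.sum fun j a => a * ec c j 0
  map_zero' := by simp
  map_add' q r := Polynomial.sum_add_index q r (fun j a => a * ec c j 0)
    (fun i => zero_mul _) (fun a b₁ b₂ => add_mul b₁ b₂ _)

lemma Lhom_apply (c : ℂ) (q : Polynomial ℂ) :
    Lhom c q = q.sum fun j a => a * ec c j 0 := rfl

lemma Lhom_C_mul (c a : ℂ) (q : Polynomial ℂ) : Lhom c (C a * q) = a * Lhom c q := by
  rw [Lhom_apply, Lhom_apply, ← smul_eq_C_mul,
    Polynomial.sum_smul_index q a _ (by intro i; ring), Polynomial.sum_def, Polynomial.sum_def,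
    Finset.mul_sum]
  exact Finset.sum_congr rfl fun j _ => by ring

lemma Lhom_range (c : ℂ) (q : Polynomial ℂ) {N : ℕ} (h : q.natDegree < N) :
    Lhom c q = ∑ j ∈ range N, q.coeff j * ec c j 0 := by
  rw [Lhom_apply]
  exact Polynomial.sum_over_range' q (f := fun j a => a * ec c j 0) (fun i => zero_mul _) N h

lemma Lhom_P (c : ℂ) (n : ℕ) : Lhom c (Pc c n) = if n = 0 then 1 else 0 := by
  rw [Lhom_range c _ (show (Pc c n).natDegree < n + 1 by rw [(Pc_monic_deg c n).2]; omega)]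
  simpa using E3 c n 0

lemma X_mul_Pc (c : ℂ) (n : ℕ) : X * Pc c (n+1) = Pc c (n+2) + Pc c n := by
  rw [show Pc c (n+2) = X * Pc c (n+1) - Pc c n from rfl]; ring

lemma LX (c : ℂ) : ∀ k n, Lhom c (X ^ k * Pc c n) = ec c k n := by
  intro k
  induction k with
  | zero =>
    intro n
    rw [pow_zero, one_mul, Lhom_P, ec]
  | succ k ih =>
    intro n
    rcases n with _ | n
    · have hX : (X : Polynomial ℂ) ^ (k+1) * Pc c 0
          = X ^ k * Pc c 1 + C c * (X ^ k * Pc c 0) := by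
        show (X : Polynomial ℂ) ^ (k+1) * 1 = X ^ k * (X - C c) + C c * (X ^ k * 1)
        ring
      rw [hX, map_add, Lhom_C_mul, ih 1, ih 0, ec]
      simp
    · have hX : (X : Polynomial ℂ) ^ (k+1) * Pc c (n+1)
          = X ^ k * Pc c (n+2) + X ^ k * Pc c n := by
        rw [← mul_add, ← X_mul_Pc]; ring
      rw [hX, map_add, ih (n+2), ih n, ec, if_neg (by omega)]
      rfl

lemma Lhom_mul_P (c : ℂ) (q : Polynomial ℂ) (n : ℕ) :
    Lhom c (q * Pc c n) = ∑ k ∈ range (q.natDegree + 1), q.coeff k * ec c k n := by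
  conv_lhs => rw [q.as_sum_range, Finset.sum_mul, ← Finset.sum_attach]
  rw [map_sum]
  rw [← Finset.sum_attach (range (q.natDegree + 1)) (fun k => q.coeff k * ec c k n)]
  refine Finset.sum_congr rfl fun k _ => ?_
  rw [← C_mul_X_pow_eq_monomial, mul_assoc, Lhom_C_mul, LX]

lemma orth (c : ℂ) (n m : ℕ) :
    Lhom c (Pc c n * Pc c m) = if n = m then 1 else 0 := by
  rw [Lhom_mul_P, (Pc_monic_deg c n).2, E3]


open Real MeasureTheory intervalIntegral

noncomputable def αr (c : ℂ) : ℝ := 4 * (2 + ‖c‖)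

lemma αr_pos (c : ℂ) : 0 < αr c := by
  have := norm_nonneg c; unfold αr; linarith

lemma αr_big (c : ℂ) : max 2 (2 * ‖c‖) < αr c := by
  have := norm_nonneg c
  apply max_lt <;> (unfold αr; linarith)

noncomputable def tc (c : ℂ) (k : ℕ) : ℂ := ec c k 0 / ((αr c : ℂ)) ^ k

lemma tc_zero (c : ℂ) : tc c 0 = 1 := by simp [tc, ec]

lemma tc_bound (c : ℂ) (k : ℕ) : ‖tc c k‖ ≤ (1/4 : ℝ) ^ k := by
  have hM : (0:ℝ) ≤ ‖c‖ := norm_nonneg c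
  have h2M : (0:ℝ) < 2 + ‖c‖ := by linarith
  rw [tc, norm_div, norm_pow, Complex.norm_real, Real.norm_eq_abs, abs_of_pos (αr_pos c)]
  rw [div_le_iff₀ (pow_pos (αr_pos c) k)]
  calc ‖ec c k 0‖ ≤ (2 + ‖c‖) ^ k := ec_bound c k 0
    _ = (1/4 : ℝ)^k * (αr c) ^ k := by
        rw [← mul_pow]; congr 1; unfold αr; ring

noncomputable def gc (c : ℂ) (k : ℕ) (θ : ℝ) : ℝ :=
  2 * (tc c (k+1) * Complex.exp ((↑(-(((k:ℝ)+1) * θ)) : ℂ) * Complex.I)).re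

lemma gc_bound (c : ℂ) (k : ℕ) (θ : ℝ) : ‖gc c k θ‖ ≤ 2 * (1/4 : ℝ) ^ (k+1) := by
  rw [gc, norm_mul, norm_two]
  have h1 : ‖(tc c (k+1) * Complex.exp ((↑(-(((k:ℝ)+1) * θ)) : ℂ) * Complex.I)).re‖
      ≤ (1/4:ℝ)^(k+1) := by
    refine le_trans (Complex.abs_re_le_norm _) ?_
    rw [norm_mul, Complex.norm_exp_ofReal_mul_I, mul_one]
    exact tc_bound c (k+1)
  nlinarith [norm_nonneg ((tc c (k+1) * Complex.exp ((↑(-(((k:ℝ)+1) * θ)) : ℂ) * Complex.I)).re)]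

lemma summable_bound : Summable (fun k : ℕ => 2 * (1/4 : ℝ) ^ (k+1)) := by
  apply Summable.mul_left
  exact (summable_geometric_of_lt_one (by norm_num) (by norm_num)).comp_injective
    (add_left_injective 1)

lemma summable_gc (c : ℂ) (θ : ℝ) : Summable (fun k => gc c k θ) :=
  Summable.of_norm_bounded summable_bound (fun k => gc_bound c k θ)

noncomputable def ρc (c : ℂ) (θ : ℝ) : ℝ := (2*π)⁻¹ * (1 + ∑' k, gc c k θ)

lemma gc_continuous (c : ℂ) (k : ℕ) : Continuous (gc c k) := by
  unfold gc; fun_prop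

lemma ρc_continuous (c : ℂ) : Continuous (ρc c) := by
  unfold ρc
  apply Continuous.mul continuous_const
  apply Continuous.add continuous_const
  exact continuous_tsum (gc_continuous c) summable_bound (fun k x => gc_bound c k x)

lemma ρc_nonneg (c : ℂ) (θ : ℝ) : 0 ≤ ρc c θ := by
  have hsum : |∑' k, gc c k θ| ≤ 2/3 := by
    refine le_trans (norm_tsum_le_tsum_norm
      (Summable.of_nonneg_of_le (fun k => norm_nonneg _) (fun k => gc_bound c k θ)
        summable_bound)) ?_
    calc ∑' k, ‖gc c k θ‖ ≤ ∑' k : ℕ, 2 * (1/4:ℝ)^(k+1) := by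
          apply Summable.tsum_le_tsum (fun k => gc_bound c k θ)
            (Summable.of_nonneg_of_le (fun k => norm_nonneg _) (fun k => gc_bound c k θ)
              summable_bound) summable_bound
      _ = 2/3 := by
          have : ∀ k : ℕ, 2 * (1/4:ℝ)^(k+1) = (2/4) * (1/4:ℝ)^k := by
            intro k; ring
          rw [tsum_congr this, tsum_mul_left, tsum_geometric_of_lt_one (by norm_num)
            (by norm_num)]
          norm_num
  have h1 : (0:ℝ) ≤ 1 + ∑' k, gc c k θ := by
    have := abs_le.mp hsum
    linarith [this.1]
  have h2 : (0:ℝ) < (2*π)⁻¹ := by positivity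
  rw [ρc]; positivity


lemma integral_exp_int (n : ℤ) :
    (∫ θ in (0:ℝ)..(2*π), Complex.exp ((n:ℂ) * θ * Complex.I))
      = if n = 0 then (2*π : ℂ) else 0 := by
  rcases eq_or_ne n 0 with h | h
  · subst h
    simp only [Int.cast_zero, zero_mul, Complex.exp_zero, if_pos]
    rw [intervalIntegral.integral_const]
    push_cast
    simp [Complex.real_smul]
  · rw [if_neg h]
    have hne : (n:ℂ) * Complex.I ≠ 0 := by
      simp [Complex.I_ne_zero, Complex.ext_iff]
      exact_mod_cast h
    have hrw : ∀ θ:ℝ, (n:ℂ) * θ * Complex.I = ((n:ℂ) * Complex.I) * θ := fun θ => by ring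
    simp_rw [hrw]
    rw [integral_exp_mul_complex hne]
    have h2 : (n:ℂ) * Complex.I * (2*π:ℝ) = (n:ℂ) * (2 * (π:ℂ) * Complex.I) := by
      push_cast; ring
    rw [h2, Complex.exp_int_mul_two_pi_mul_I]
    simp


lemma gc_cast (c : ℂ) (k : ℕ) (θ : ℝ) :
    ((gc c k θ : ℝ) : ℂ)
      = tc c (k+1) * Complex.exp ((↑(-(((k:ℝ)+1) * θ)) : ℂ) * Complex.I)
        + (starRingEnd ℂ) (tc c (k+1))
            * Complex.exp ((↑((((k:ℝ)+1)) * θ) : ℂ) * Complex.I) := by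
  set z := tc c (k+1) * Complex.exp ((↑(-(((k:ℝ)+1) * θ)) : ℂ) * Complex.I) with hz
  have h1 : ((gc c k θ : ℝ) : ℂ) = ((2 * z.re : ℝ) : ℂ) := by rw [gc]
  rw [h1, ← Complex.add_conj]
  congr 1
  rw [hz, map_mul]
  congr 1
  rw [← Complex.exp_conj]
  congr 1
  simp [Complex.conj_ofReal]

lemma exp_cont (a : ℂ) : Continuous (fun θ : ℝ => Complex.exp ((a * θ) * Complex.I)) := by
  fun_prop

lemma integral_exp_gc (c : ℂ) (j k : ℕ) :
    (∫ θ in (0:ℝ)..(2*π), Complex.exp ((j:ℂ) * θ * Complex.I) * ((gc c k θ : ℝ) : ℂ))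
      = if k + 1 = j then (2*π:ℂ) * tc c j else 0 := by
  have hmul2 : ∀ θ : ℝ,
      Complex.exp ((j:ℂ) * θ * Complex.I) * ((gc c k θ : ℝ) : ℂ)
        = tc c (k+1) * Complex.exp (((((j:ℤ) - (k:ℤ) - 1 : ℤ)):ℂ) * θ * Complex.I)
          + (starRingEnd ℂ) (tc c (k+1))
              * Complex.exp (((((j:ℤ) + (k:ℤ) + 1 : ℤ)):ℂ) * θ * Complex.I) := by
    intro θ
    rw [gc_cast]
    rw [mul_add]
    congr 1
    · rw [mul_comm (Complex.exp _) _, mul_assoc, ← Complex.exp_add]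
      congr 2
      push_cast; ring
    · rw [mul_comm (Complex.exp _) _, mul_assoc, ← Complex.exp_add]
      congr 2
      push_cast; ring
  simp_rw [hmul2]
  rw [intervalIntegral.integral_add, intervalIntegral.integral_const_mul,
    intervalIntegral.integral_const_mul, integral_exp_int, integral_exp_int]
  · rw [if_neg (by omega : ¬ ((j:ℤ) + (k:ℤ) + 1 = 0)), mul_zero, add_zero]
    by_cases h : k + 1 = j
    · rw [if_pos (by omega), if_pos h, ← h]; ring
    · rw [if_neg (by omega), if_neg h, mul_zero]
  · exact (continuous_const.mul (exp_cont _)).intervalIntegrable _ _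
  · exact (continuous_const.mul (exp_cont _)).intervalIntegrable _ _


lemma integral_exp_rho (c : ℂ) (j : ℕ) :
    (∫ θ in (0:ℝ)..(2*π), Complex.exp ((j:ℂ) * θ * Complex.I) * ((ρc c θ : ℝ) : ℂ))
      = tc c j := by
  have hπ : (0:ℝ) < π := Real.pi_pos
  have h02 : (0:ℝ) ≤ 2*π := by linarith
  set F : ℕ → ℝ → ℂ :=
    fun k θ => Complex.exp ((j:ℂ) * θ * Complex.I) * ((gc c k θ : ℝ) : ℂ) with hF
  have hts_cont : Continuous (fun θ : ℝ => ∑' k, gc c k θ) :=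
    continuous_tsum (gc_continuous c) summable_bound (fun k x => gc_bound c k x)
  have hρ : ∀ θ : ℝ, ((ρc c θ : ℝ) : ℂ)
      = ((2*π:ℝ):ℂ)⁻¹ * (1 + ∑' k, ((gc c k θ : ℝ) : ℂ)) := by
    intro θ
    rw [ρc]
    push_cast [Complex.ofReal_tsum]
    ring
  have hsplit : ∀ θ : ℝ, Complex.exp ((j:ℂ) * θ * Complex.I) * ((ρc c θ : ℝ) : ℂ)
      = ((2*π:ℝ):ℂ)⁻¹ * Complex.exp ((j:ℂ) * θ * Complex.I)
        + ((2*π:ℝ):ℂ)⁻¹ * ∑' k, F k θ := by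
    intro θ
    rw [hρ θ, hF]
    simp only []
    rw [tsum_mul_left]
    ring
  simp_rw [hsplit]
  have htsF : ∀ θ : ℝ, ∑' k, F k θ
      = Complex.exp ((j:ℂ) * θ * Complex.I) * (((∑' k, gc c k θ : ℝ)) : ℂ) := by
    intro θ
    rw [hF]
    simp only []
    rw [tsum_mul_left, Complex.ofReal_tsum]
  have hcont2 : Continuous (fun θ : ℝ => ∑' k, F k θ) := by
    rw [show (fun θ : ℝ => ∑' k, F k θ)
        = fun θ : ℝ => Complex.exp ((j:ℂ) * θ * Complex.I)
            * (((∑' k, gc c k θ : ℝ)) : ℂ) from funext htsF]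
    exact (exp_cont _).mul (Complex.continuous_ofReal.comp hts_cont)
  rw [intervalIntegral.integral_add
      (f := fun θ : ℝ => ((2*π:ℝ):ℂ)⁻¹ * Complex.exp ((j:ℂ) * θ * Complex.I))
      (g := fun θ : ℝ => ((2*π:ℝ):ℂ)⁻¹ * ∑' k, F k θ)
      ((continuous_const.mul (exp_cont _)).intervalIntegrable _ _)
      ((continuous_const.mul hcont2).intervalIntegrable _ _),
    intervalIntegral.integral_const_mul, intervalIntegral.integral_const_mul]
  -- first integral
  have hI1 : (∫ θ in (0:ℝ)..(2*π), Complex.exp ((j:ℂ) * θ * Complex.I))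
      = if j = 0 then (2*π:ℂ) else 0 := by
    have := integral_exp_int ((j:ℤ))
    simp only [Int.cast_natCast] at this
    rw [this]
    by_cases h : j = 0
    · rw [if_pos (by exact_mod_cast h), if_pos h]
    · rw [if_neg (by exact_mod_cast h), if_neg h]
  -- second integral : interchange
  have hint : ∀ k, Integrable (F k) (volume.restrict (Set.Ioc 0 (2*π))) := by
    intro k
    rw [← MeasureTheory.IntegrableOn, ← intervalIntegrable_iff_integrableOn_Ioc_of_le h02]
    exact ((exp_cont _).mul
      (Complex.continuous_ofReal.comp (gc_continuous c k))).intervalIntegrable _ _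
  have hFnorm : ∀ k θ, ‖F k θ‖ ≤ 2 * (1/4:ℝ)^(k+1) := by
    intro k θ
    rw [hF]
    simp only []
    rw [norm_mul]
    have h1 : ‖Complex.exp ((j:ℂ) * θ * Complex.I)‖ = 1 := by
      have hh : (j:ℂ) * θ * Complex.I = (((j:ℝ) * θ : ℝ) : ℂ) * Complex.I := by
        push_cast; ring
      rw [hh, Complex.norm_exp_ofReal_mul_I]
    rw [h1, one_mul, Complex.norm_real]
    exact gc_bound c k θ
  have hμ : (volume (Set.Ioc (0:ℝ) (2*π))).toReal = 2*π := by
    rw [Real.volume_Ioc, sub_zero, ENNReal.toReal_ofReal h02]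
  have hnormint : ∀ k, (∫ θ in Set.Ioc (0:ℝ) (2*π), ‖F k θ‖)
      ≤ (2*π) * (2 * (1/4:ℝ)^(k+1)) := by
    intro k
    calc (∫ θ in Set.Ioc (0:ℝ) (2*π), ‖F k θ‖)
        ≤ ∫ _θ in Set.Ioc (0:ℝ) (2*π), 2 * (1/4:ℝ)^(k+1) := by
          apply MeasureTheory.setIntegral_mono_on ((hint k).norm)
            (MeasureTheory.integrableOn_const (by
              rw [Real.volume_Ioc]; exact ENNReal.ofReal_ne_top))
            measurableSet_Ioc
          intro θ _
          exact hFnorm k θ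
      _ = (2*π) * (2 * (1/4:ℝ)^(k+1)) := by
          rw [MeasureTheory.setIntegral_const, smul_eq_mul, Measure.real, hμ]
  have hsum : Summable (fun k => ∫ θ in Set.Ioc (0:ℝ) (2*π), ‖F k θ‖) := by
    apply Summable.of_nonneg_of_le
      (fun k => MeasureTheory.integral_nonneg (fun θ => norm_nonneg _)) hnormint
    exact summable_bound.mul_left _
  have hkey : (∫ θ in Set.Ioc (0:ℝ) (2*π), ∑' k, F k θ)
      = ∑' k, ∫ θ in Set.Ioc (0:ℝ) (2*π), F k θ :=
    (MeasureTheory.integral_tsum_of_summable_integral_norm hint hsum).symm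
  have hI2 : (∫ θ in (0:ℝ)..(2*π), ∑' k, F k θ)
      = if j = 0 then 0 else (2*π:ℂ) * tc c j := by
    rw [intervalIntegral.integral_of_le h02, hkey]
    have heach : ∀ k, (∫ θ in Set.Ioc (0:ℝ) (2*π), F k θ)
        = if k + 1 = j then (2*π:ℂ) * tc c j else 0 := by
      intro k
      rw [← intervalIntegral.integral_of_le h02]
      exact integral_exp_gc c j k
    rw [tsum_congr heach]
    rcases j with _ | j'
    · simp
    · rw [if_neg (by omega)]
      have : ∀ k : ℕ, (if k + 1 = j' + 1 then (2*π:ℂ) * tc c (j'+1) else 0)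
          = if k = j' then (2*π:ℂ) * tc c (j'+1) else 0 := by
        intro k; by_cases h : k = j'
        · rw [if_pos (by omega), if_pos h]
        · rw [if_neg (by omega), if_neg h]
      rw [tsum_congr this, tsum_ite_eq]
  rw [hI1, hI2]
  have hπC : ((2*π:ℝ):ℂ) ≠ 0 := by
    simp [Complex.ofReal_ne_zero]
  rcases j with _ | j'
  · rw [if_pos rfl, if_pos rfl, mul_zero, add_zero, tc_zero,
      show (2*(π:ℂ)) = ((2*π:ℝ):ℂ) by push_cast; ring, inv_mul_cancel₀ hπC]
  · rw [if_neg (by omega), if_neg (by omega), mul_zero, zero_add,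
      show (2*(π:ℂ)) = ((2*π:ℝ):ℂ) by push_cast; ring, ← mul_assoc,
      inv_mul_cancel₀ hπC, one_mul]


lemma integral_poly (c : ℂ) (q : Polynomial ℂ) :
    (∫ θ in (0:ℝ)..(2*π),
        q.eval (((αr c : ℝ) : ℂ) * Complex.exp ((θ:ℂ) * Complex.I)) * ((ρc c θ : ℝ) : ℂ))
      = Lhom c q := by
  have hα : ((αr c : ℝ):ℂ) ≠ 0 := by
    rw [Complex.ofReal_ne_zero]
    exact (αr_pos c).ne'
  have hre : ∀ θ : ℝ,
      q.eval (((αr c : ℝ):ℂ) * Complex.exp ((θ:ℂ) * Complex.I)) * ((ρc c θ : ℝ) : ℂ)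
        = ∑ j ∈ range (q.natDegree + 1),
            (q.coeff j * ((αr c:ℝ):ℂ)^j)
              * (Complex.exp ((j:ℂ) * θ * Complex.I) * ((ρc c θ : ℝ):ℂ)) := by
    intro θ
    rw [Polynomial.eval_eq_sum_range, Finset.sum_mul]
    refine Finset.sum_congr rfl fun j _ => ?_
    rw [mul_pow, ← Complex.exp_nat_mul,
      show (j:ℂ)*((θ:ℂ)*Complex.I) = (j:ℂ)*θ*Complex.I from (mul_assoc _ _ _).symm]
    ring
  simp_rw [hre]
  rw [intervalIntegral.integral_finset_sum]
  · have heach : ∀ j ∈ range (q.natDegree + 1),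
        (∫ θ in (0:ℝ)..(2*π), (q.coeff j * ((αr c:ℝ):ℂ)^j)
          * (Complex.exp ((j:ℂ) * θ * Complex.I) * ((ρc c θ : ℝ):ℂ)))
        = q.coeff j * ec c j 0 := by
      intro j _
      rw [intervalIntegral.integral_const_mul, integral_exp_rho, tc]
      field_simp
    rw [Finset.sum_congr rfl heach,
      Lhom_range c q (N := q.natDegree + 1) (Nat.lt_succ_self _)]
  · intro j _
    exact (continuous_const.mul ((exp_cont _).mul
      (Complex.continuous_ofReal.comp (ρc_continuous c)))).intervalIntegrable _ _

end RankOneAux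

/-- **Nonnegative orthogonality weight for the complex rank-one perturbation of the free Jacobi
matrix:** there exist `α > R₀ = max(2, 2|c|)` and a continuous function `ρ` on `[0, 2π]`,
nonnegative on `(0, 2π)`, such that
`∫₀^{2π} p_n(α e^{iθ}) p_m(α e^{iθ}) ρ(θ) dθ = δ_{n,m}` (no conjugation on the polynomials). -/
theorem rank_one_perturbation_nonnegative_weight
    (c : ℂ) (p : ℕ → Polynomial ℂ)
    (hp0 : p 0 = 1) (hp1 : p 1 = Polynomial.X - Polynomial.C c)
    (hrec : ∀ n : ℕ, 1 ≤ n → p (n + 1) = Polynomial.X * p n - p (n - 1)) :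
    ∃ (α : ℝ) (ρ : ℝ → ℝ),
      max 2 (2 * ‖c‖) < α ∧
      ContinuousOn ρ (Set.Icc 0 (2 * Real.pi)) ∧
      (∀ θ ∈ Set.Ioo 0 (2 * Real.pi), 0 ≤ ρ θ) ∧
      (∀ n m : ℕ,
        ∫ θ in (0:ℝ)..(2 * Real.pi),
          (p n).eval ((α : ℂ) * Complex.exp ((θ : ℂ) * Complex.I)) *
            (p m).eval ((α : ℂ) * Complex.exp ((θ : ℂ) * Complex.I)) * (ρ θ : ℂ)
        = if n = m then 1 else 0) := by
  classical
  refine ⟨RankOneAux.αr c, RankOneAux.ρc c, RankOneAux.αr_big c,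
    (RankOneAux.ρc_continuous c).continuousOn, fun θ _ => RankOneAux.ρc_nonneg c θ, ?_⟩
  intro n m
  have hp' : ∀ n, p n = RankOneAux.Pc c n := by
    intro n
    induction n using Nat.twoStepInduction with
    | zero => exact hp0
    | one => exact hp1
    | more n ih1 ih2 =>
      rw [hrec (n+1) (by omega)]
      show Polynomial.X * p (n + 1) - p n = _
      rw [ih1, ih2]
      rfl
  have hre : ∀ θ : ℝ,
      (p n).eval (((RankOneAux.αr c : ℝ) : ℂ) * Complex.exp ((θ : ℂ) * Complex.I)) *
          (p m).eval (((RankOneAux.αr c : ℝ) : ℂ) * Complex.exp ((θ : ℂ) * Complex.I))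
          * ((RankOneAux.ρc c θ : ℝ) : ℂ)
        = (RankOneAux.Pc c n * RankOneAux.Pc c m).eval
            (((RankOneAux.αr c : ℝ) : ℂ) * Complex.exp ((θ : ℂ) * Complex.I))
          * ((RankOneAux.ρc c θ : ℝ) : ℂ) := by
    intro θ
    rw [hp' n, hp' m, Polynomial.eval_mul]
  simp_rw [hre]
  rw [RankOneAux.integral_poly, RankOneAux.orth]
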